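/- There exists a constant C > 0 such that for all integers 0 ≤ m ≤ n and every 2π-periodic f ∈ L¹(−π, π), the de la Vallée Poussin means satisfy ∫_{−π}^{π} |V_{n,m}[f](x)| dx ≤ C·(1 + ln((n+1)/(m+1)))·∫_{−π}^{π} |f(t)| dt. -/

import Mathlib

open MeasureTheory Real intervalIntegral

/-- The de la Vallée Poussin kernel
`Φ_{n,m}(t) = sin((m+1)t/2)·sin((2n−m+1)t/2)/(2 sin²(t/2))`. -/
noncomputable def Phi (n m : ℕ) (t : ℝ) : ℝ :=
  Real.sin (((m : ℝ) + 1) * t / 2) * Real.sin ((2 * (n : ℝ) - m + 1) * t / 2) /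
    (2 * Real.sin (t / 2) ^ 2)

/-- The de la Vallée Poussin mean
`V_{n,m}[f](x) = (1/(π(m+1))) ∫_{−π}^{π} f(t) Φ_{n,m}(t−x) dt`. -/
noncomputable def vdlP (n m : ℕ) (f : ℝ → ℝ) (x : ℝ) : ℝ :=
  (1 / (π * ((m : ℝ) + 1))) * ∫ t in (-π)..π, f t * Phi n m (t - x)

lemma abs_sin_nat_mul_le (k : ℕ) (x : ℝ) : |Real.sin (k * x)| ≤ k * |Real.sin x| := by
  induction k with
  | zero => simp
  | succ k ih =>
    have : ((k : ℝ) + 1) * x = k * x + x := by ring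
    push_cast
    rw [this, Real.sin_add]
    calc |Real.sin (k*x) * Real.cos x + Real.cos (k*x) * Real.sin x|
        ≤ |Real.sin (k*x) * Real.cos x| + |Real.cos (k*x) * Real.sin x| := abs_add_le _ _
      _ ≤ |Real.sin (k*x)| * 1 + 1 * |Real.sin x| := by
          rw [abs_mul, abs_mul]
          gcongr
          · exact Real.abs_cos_le_one x
          · exact Real.abs_cos_le_one _
      _ ≤ (k : ℝ) * |Real.sin x| + 1 * |Real.sin x| := by
          rw [mul_one]; gcongr
      _ = ((k : ℝ) + 1) * |Real.sin x| := by ring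

lemma cast_N {m n : ℕ} (hmn : m ≤ n) : (2 * (n:ℝ) - m + 1) = ((2*n - m + 1 : ℕ) : ℝ) := by
  have h : m ≤ 2 * n := hmn.trans (by omega)
  push_cast [Nat.cast_sub h]
  ring

lemma phi_even (n m : ℕ) (t : ℝ) : Phi n m (-t) = Phi n m t := by
  unfold Phi
  rw [show ((m:ℝ)+1) * (-t) / 2 = -(((m:ℝ)+1) * t / 2) by ring,
    show (2*(n:ℝ)-m+1) * (-t) / 2 = -((2*(n:ℝ)-m+1) * t / 2) by ring,
    show (-t)/2 = -(t/2) by ring, Real.sin_neg, Real.sin_neg, Real.sin_neg]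
  ring

lemma phi_periodic {n m : ℕ} (hmn : m ≤ n) : Function.Periodic (Phi n m) (2 * π) := by
  intro t
  unfold Phi
  rw [cast_N hmn]
  have h1 : ((m:ℝ)+1) * (t + 2*π) / 2 = ((m:ℝ)+1) * t / 2 + (m+1 : ℕ) * π := by push_cast; ring
  have h2 : ((2*n-m+1:ℕ):ℝ) * (t + 2*π) / 2 = ((2*n-m+1:ℕ):ℝ) * t / 2 + (2*n-m+1 : ℕ) * π := by
    push_cast; ring
  have h3 : (t + 2*π)/2 = t/2 + π := by ring
  rw [h1, h2, h3, Real.sin_add_nat_mul_pi, Real.sin_add_nat_mul_pi, Real.sin_add_pi]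
  have : ((-1:ℝ))^(m+1) * ((-1:ℝ))^(2*n-m+1) = 1 := by
    rw [← pow_add]
    have : m + 1 + (2*n - m + 1) = 2*(n+1) := by omega
    rw [this, pow_mul]
    norm_num
  have hgoal : ((-1:ℝ))^(m+1) * Real.sin (((m:ℝ)+1) * t / 2) *
      (((-1:ℝ))^(2*n-m+1) * Real.sin (((2*n-m+1:ℕ):ℝ) * t / 2)) =
      Real.sin (((m:ℝ)+1) * t / 2) * Real.sin (((2*n-m+1:ℕ):ℝ) * t / 2) := by
    calc ((-1:ℝ))^(m+1) * Real.sin (((m:ℝ)+1) * t / 2) *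
        (((-1:ℝ))^(2*n-m+1) * Real.sin (((2*n-m+1:ℕ):ℝ) * t / 2))
        = (((-1:ℝ))^(m+1) * ((-1:ℝ))^(2*n-m+1)) *
          (Real.sin (((m:ℝ)+1) * t / 2) * Real.sin (((2*n-m+1:ℕ):ℝ) * t / 2)) := by ring
      _ = _ := by rw [this]; ring
  rw [neg_sq] at *
  rw [hgoal]

-- lower bound for sin on (0, π]
lemma sin_half_ge {t : ℝ} (h0 : 0 < t) (hπ : t ≤ π) : t / π ≤ Real.sin (t/2) := by
  have := Real.mul_le_sin (x := t/2) (by linarith) (by linarith)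
  calc t/π = 2/π * (t/2) := by field_simp
    _ ≤ Real.sin (t/2) := this

lemma phi_abs_le_div {m n : ℕ} (t : ℝ) (h0 : 0 < t) (hπ : t ≤ π) :
    |Phi n m t| ≤ ((m:ℝ)+1) * π / (2*t) := by
  have hsin : t/π ≤ Real.sin (t/2) := sin_half_ge h0 hπ
  have htπ : 0 < t/π := div_pos h0 Real.pi_pos
  have hs : 0 < Real.sin (t/2) := lt_of_lt_of_le htπ hsin
  have hs2 : (0:ℝ) < 2 * Real.sin (t/2)^2 := by positivity
  rw [Phi, abs_div, abs_of_pos hs2, div_le_div_iff₀ hs2 (by positivity), abs_mul]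
  have b1 : |Real.sin (((m:ℝ)+1) * t / 2)| ≤ ((m:ℝ)+1) * Real.sin (t/2) := by
    have := abs_sin_nat_mul_le (m+1) (t/2)
    rw [show ((m+1:ℕ):ℝ) * (t/2) = ((m:ℝ)+1)*t/2 by push_cast; ring] at this
    push_cast at this
    rwa [abs_of_pos hs] at this
  have b2 : |Real.sin ((2*(n:ℝ)-m+1) * t / 2)| ≤ 1 := Real.abs_sin_le_one _
  calc |Real.sin (((m:ℝ)+1) * t / 2)| * |Real.sin ((2*(n:ℝ)-m+1) * t / 2)| * (2*t)
      ≤ (((m:ℝ)+1) * Real.sin (t/2)) * 1 * (2*t) := by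
        apply mul_le_mul_of_nonneg_right (mul_le_mul b1 b2 (abs_nonneg _) (by positivity))
        positivity
    _ = ((m:ℝ)+1) * Real.sin (t/2) * (2 * t) := by ring
    _ ≤ ((m:ℝ)+1) * Real.sin (t/2) * (2 * (π * Real.sin (t/2))) := by
        have ht' : t ≤ π * Real.sin (t/2) := by
          rw [← div_le_iff₀' Real.pi_pos]; exact hsin
        gcongr
    _ = ((m:ℝ)+1) * π * (2 * Real.sin (t/2)^2) := by ring

lemma phi_abs_le_sq {m n : ℕ} (t : ℝ) (h0 : 0 < t) (hπ : t ≤ π) :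
    |Phi n m t| ≤ π^2 / (2*t^2) := by
  have hsin : t/π ≤ Real.sin (t/2) := sin_half_ge h0 hπ
  have htπ : 0 < t/π := div_pos h0 Real.pi_pos
  have hs : 0 < Real.sin (t/2) := lt_of_lt_of_le htπ hsin
  have hs2 : (0:ℝ) < 2 * Real.sin (t/2)^2 := by positivity
  rw [Phi, abs_div, abs_of_pos hs2, div_le_div_iff₀ hs2 (by positivity), abs_mul]
  have hsq : t^2/π^2 ≤ Real.sin (t/2)^2 := by
    have := pow_le_pow_left₀ htπ.le hsin 2
    rwa [div_pow] at this
  calc |Real.sin (((m:ℝ)+1) * t / 2)| * |Real.sin ((2*(n:ℝ)-m+1) * t / 2)| * (2*t^2)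
      ≤ 1 * 1 * (2*t^2) := by
        apply mul_le_mul_of_nonneg_right
          (mul_le_mul (Real.abs_sin_le_one _) (Real.abs_sin_le_one _) (abs_nonneg _) zero_le_one)
        positivity
    _ = π^2 * (2 * (t^2/π^2)) := by field_simp
    _ ≤ π^2 * (2 * Real.sin (t/2)^2) := by gcongr


-- global bound
lemma phi_abs_le {m n : ℕ} (hmn : m ≤ n) (t : ℝ) :
    |Phi n m t| ≤ ((m:ℝ)+1) * (2*(n:ℝ)-m+1) / 2 := by
  have hN : (0:ℝ) < 2*(n:ℝ)-m+1 := by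
    have : (m:ℝ) ≤ n := by exact_mod_cast hmn
    nlinarith [Nat.cast_nonneg (α := ℝ) n]
  by_cases hs : Real.sin (t/2) = 0
  · simp [Phi, hs]
    positivity
  · have hs2 : (0:ℝ) < 2 * Real.sin (t/2)^2 := by positivity
    rw [Phi, abs_div, abs_of_pos hs2, div_le_iff₀ hs2, abs_mul]
    have b1 : |Real.sin (((m:ℝ)+1) * t / 2)| ≤ ((m:ℝ)+1) * |Real.sin (t/2)| := by
      have := abs_sin_nat_mul_le (m+1) (t/2)
      rw [show ((m+1:ℕ):ℝ) * (t/2) = ((m:ℝ)+1)*t/2 by push_cast; ring] at this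
      push_cast at this
      exact this
    have b2 : |Real.sin ((2*(n:ℝ)-m+1) * t / 2)| ≤ (2*(n:ℝ)-m+1) * |Real.sin (t/2)| := by
      have := abs_sin_nat_mul_le (2*n-m+1) (t/2)
      rw [show ((2*n-m+1:ℕ):ℝ) * (t/2) = ((2*n-m+1:ℕ):ℝ)*t/2 by ring] at this
      rw [cast_N hmn]
      exact this
    calc |Real.sin (((m:ℝ)+1) * t / 2)| * |Real.sin ((2*(n:ℝ)-m+1) * t / 2)|
        ≤ (((m:ℝ)+1) * |Real.sin (t/2)|) * ((2*(n:ℝ)-m+1) * |Real.sin (t/2)|) := by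
          apply mul_le_mul b1 b2 (abs_nonneg _) (by positivity)
      _ = ((m:ℝ)+1) * (2*(n:ℝ)-m+1) / 2 * (2 * Real.sin (t/2)^2) := by
          rw [← sq_abs]; ring

lemma phi_measurable (n m : ℕ) : Measurable (Phi n m) := by
  unfold Phi; fun_prop

lemma phi_abs_intervalIntegrable {m n : ℕ} (hmn : m ≤ n) (a b : ℝ) :
    IntervalIntegrable (fun t => |Phi n m t|) volume a b := by
  apply IntervalIntegrable.mono_fun' (g := fun _ => ((m:ℝ)+1) * (2*(n:ℝ)-m+1) / 2)
    intervalIntegrable_const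
  · exact ((phi_measurable n m).abs).aestronglyMeasurable
  · filter_upwards with t
    simpa using phi_abs_le hmn t

set_option maxHeartbeats 1000000 in
lemma kernel_L1 {m n : ℕ} (hmn : m ≤ n) :
    (∫ t in (-π)..π, |Phi n m t|) ≤
      ((m:ℝ)+1) * ((1 + π * Real.log 2 + π^2) * (1 + Real.log (((n:ℝ)+1)/((m:ℝ)+1)))) := by
  set M : ℝ := (m:ℝ)+1 with hM
  set N : ℝ := 2*(n:ℝ)-m+1 with hN
  have hmn' : (m:ℝ) ≤ n := by exact_mod_cast hmn
  have hM0 : 0 < M := by positivity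
  have hN0 : 0 < N := by rw [hN]; linarith
  have hMN : M ≤ N := by rw [hM, hN]; linarith
  have hN2 : N ≤ 2*((n:ℝ)+1) := by rw [hN]; have : (0:ℝ) ≤ m := Nat.cast_nonneg m; linarith
  set α : ℝ := 1/N with hα
  set β : ℝ := 1/M with hβ
  have hα0 : 0 < α := by positivity
  have hαβ : α ≤ β := by apply div_le_div_of_nonneg_left (by norm_num) hM0 hMN
  have hβ1 : β ≤ 1 := by rw [hβ]; rw [div_le_one hM0]; rw [hM]; simp [Nat.cast_nonneg]
  have hβπ : β ≤ π := hβ1.trans (by linarith [Real.pi_gt_three])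
  have hL0 : 0 ≤ Real.log (((n:ℝ)+1)/M) := by
    apply Real.log_nonneg
    rw [le_div_iff₀ hM0]
    rw [hM]; push_cast; linarith
  -- even: reduce to [0, π]
  have heven : (∫ t in (-π)..π, |Phi n m t|) = 2 * ∫ t in (0:ℝ)..π, |Phi n m t| := by
    have h1 : (∫ t in (-π)..(0:ℝ), |Phi n m t|) = ∫ t in (0:ℝ)..π, |Phi n m t| := by
      have h2 := intervalIntegral.integral_comp_neg (a := 0) (b := π) (fun t => |Phi n m t|)
      simp only [neg_zero] at h2
      rw [← h2]
      simp only [phi_even]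
    rw [← intervalIntegral.integral_add_adjacent_intervals
      (phi_abs_intervalIntegrable hmn (-π) 0) (phi_abs_intervalIntegrable hmn 0 π), h1]
    ring
  rw [heven]
  -- split [0,π] at α and β
  have hsplit : (∫ t in (0:ℝ)..π, |Phi n m t|) =
      (∫ t in (0:ℝ)..α, |Phi n m t|) + (∫ t in α..β, |Phi n m t|) +
      (∫ t in β..π, |Phi n m t|) := by
    rw [intervalIntegral.integral_add_adjacent_intervals
      (phi_abs_intervalIntegrable hmn 0 α) (phi_abs_intervalIntegrable hmn α β),
      intervalIntegral.integral_add_adjacent_intervals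
      ((phi_abs_intervalIntegrable hmn 0 α).trans (phi_abs_intervalIntegrable hmn α β))
      (phi_abs_intervalIntegrable hmn β π)]
  rw [hsplit]
  -- piece 1
  have I1 : (∫ t in (0:ℝ)..α, |Phi n m t|) ≤ M/2 := by
    calc (∫ t in (0:ℝ)..α, |Phi n m t|) ≤ ∫ _ in (0:ℝ)..α, M*N/2 := by
          apply intervalIntegral.integral_mono_on hα0.le
            (phi_abs_intervalIntegrable hmn 0 α) intervalIntegrable_const
          intro t _; exact phi_abs_le hmn t
      _ = α * (M*N/2) := by simp [smul_eq_mul]; ring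
      _ = M/2 := by rw [hα]; field_simp
  -- piece 2
  have h1div : IntervalIntegrable (fun t : ℝ => M*π/2 * (1/t)) volume α β := by
    apply IntervalIntegrable.const_mul
    apply intervalIntegral.intervalIntegrable_one_div
    · intro x hx
      rcases hx with ⟨h1, h2⟩
      have : (0:ℝ) < x := lt_of_lt_of_le (lt_min hα0 (hα0.trans_le hαβ)) h1
      exact this.ne'
    · fun_prop
  have I2 : (∫ t in α..β, |Phi n m t|) ≤ M*π/2 * Real.log (N/M) := by
    calc (∫ t in α..β, |Phi n m t|) ≤ ∫ t in α..β, M*π/2 * (1/t) := by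
          apply intervalIntegral.integral_mono_on hαβ
            (phi_abs_intervalIntegrable hmn α β) h1div
          intro t ht
          have ht0 : 0 < t := lt_of_lt_of_le hα0 ht.1
          have htπ : t ≤ π := le_trans ht.2 hβπ
          calc |Phi n m t| ≤ M * π / (2*t) := phi_abs_le_div t ht0 htπ
            _ = M*π/2 * (1/t) := by field_simp
      _ = M*π/2 * Real.log (β/α) := by
          rw [intervalIntegral.integral_const_mul, integral_one_div]
          intro hx
          rcases hx with ⟨h1, h2⟩
          have : (0:ℝ) < min α β := lt_min hα0 (hα0.trans_le hαβ)
          linarith [this.trans_le h1]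
      _ = M*π/2 * Real.log (N/M) := by
          congr 2
          rw [hα, hβ]
          field_simp
  -- piece 3
  have hzp : IntervalIntegrable (fun t : ℝ => π^2/2 * t^(-2:ℤ)) volume β π := by
    apply IntervalIntegrable.const_mul
    apply intervalIntegrable_zpow
    right
    intro hx
    rcases hx with ⟨h1, h2⟩
    have : (0:ℝ) < min β π := lt_min (hα0.trans_le hαβ) Real.pi_pos
    linarith [this.trans_le h1]
  have I3 : (∫ t in β..π, |Phi n m t|) ≤ π^2/2 * M := by
    have hc : (0:ℝ) ∉ Set.uIcc β π := by
      intro hx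
      rcases hx with ⟨h1, h2⟩
      have : (0:ℝ) < min β π := lt_min (hα0.trans_le hαβ) Real.pi_pos
      linarith [this.trans_le h1]
    calc (∫ t in β..π, |Phi n m t|) ≤ ∫ t in β..π, π^2/2 * t^(-2:ℤ) := by
          apply intervalIntegral.integral_mono_on hβπ
            (phi_abs_intervalIntegrable hmn β π) hzp
          intro t ht
          have ht0 : 0 < t := lt_of_lt_of_le (hα0.trans_le hαβ) ht.1
          calc |Phi n m t| ≤ π^2/(2*t^2) := phi_abs_le_sq t ht0 ht.2
            _ = π^2/2 * t^(-2:ℤ) := by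
                rw [zpow_neg, ← zpow_natCast t 2]
                norm_num
                field_simp
      _ = π^2/2 * (β⁻¹ - π⁻¹) := by
          rw [intervalIntegral.integral_const_mul, integral_zpow (Or.inr ⟨by norm_num, hc⟩)]
          norm_num
          ring
      _ ≤ π^2/2 * M := by
          apply mul_le_mul_of_nonneg_left _ (by positivity)
          rw [hβ, one_div, inv_inv]
          have : 0 < π⁻¹ := by positivity
          linarith
  -- combine
  have hlog : Real.log (N/M) ≤ Real.log 2 + Real.log (((n:ℝ)+1)/M) := by
    rw [← Real.log_mul (by norm_num) (by positivity)]
    apply Real.log_le_log (by positivity)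
    calc N/M ≤ 2*((n:ℝ)+1)/M := by gcongr
      _ = 2*(((n:ℝ)+1)/M) := by ring
  have hK : π ≤ 1 + π * Real.log 2 + π^2 := by
    have h2 : 0 ≤ Real.log 2 := Real.log_nonneg (by norm_num)
    nlinarith [Real.pi_gt_three]
  calc 2 * ((∫ t in (0:ℝ)..α, |Phi n m t|) + (∫ t in α..β, |Phi n m t|) +
      (∫ t in β..π, |Phi n m t|))
      ≤ 2 * (M/2 + M*π/2 * Real.log (N/M) + π^2/2 * M) := by linarith
    _ = M * (1 + π * Real.log (N/M) + π^2) := by ring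
    _ ≤ M * (1 + π * (Real.log 2 + Real.log (((n:ℝ)+1)/M)) + π^2) := by
        have hp := Real.pi_pos
        gcongr
    _ = M * ((1 + π * Real.log 2 + π^2) + π * Real.log (((n:ℝ)+1)/M)) := by ring
    _ ≤ M * ((1 + π * Real.log 2 + π^2) * (1 + Real.log (((n:ℝ)+1)/M))) := by
        apply mul_le_mul_of_nonneg_left _ hM0.le
        have h2 : 0 ≤ Real.log 2 := Real.log_nonneg (by norm_num)
        nlinarith [hK, hL0]

/-- `L¹`-estimate for the de la Vallée Poussin means:
`∫_{−π}^{π} |V_{n,m}[f]| ≤ C(1 + ln((n+1)/(m+1))) ∫_{−π}^{π} |f|`. -/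
theorem vdlP_L1_estimate :
    ∃ C : ℝ, 0 < C ∧ ∀ m n : ℕ, m ≤ n → ∀ f : ℝ → ℝ,
      Measurable f → Function.Periodic f (2 * π) →
      IntervalIntegrable f volume (-π) π →
      (∫ x in (-π)..π, |vdlP n m f x|) ≤
        C * (1 + Real.log (((n : ℝ) + 1) / ((m : ℝ) + 1))) * ∫ t in (-π)..π, |f t| := by
  refine ⟨(1 + π * Real.log 2 + π^2)/π, by positivity, ?_⟩
  intro m n hmn f hfm _hper hfi
  set K : ℝ := 1 + π * Real.log 2 + π^2 with hK
  set L : ℝ := Real.log (((n:ℝ)+1)/((m:ℝ)+1)) with hLdef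
  set M : ℝ := (m:ℝ)+1 with hM
  have hM0 : 0 < M := by positivity
  have hππ : -π ≤ π := by linarith [Real.pi_pos]
  have hIoc : Set.uIoc (-π) π = Set.Ioc (-π) π := Set.uIoc_of_le hππ
  set B : ℝ := M * (2*(n:ℝ)-m+1) / 2 with hB
  set ν : Measure ℝ := volume.restrict (Set.Ioc (-π) π) with hν
  have hνf : IsFiniteMeasure ν := by
    refine ⟨?_⟩; rw [hν, Measure.restrict_apply_univ]; exact measure_Ioc_lt_top
  have hfI : IntegrableOn f (Set.Ioc (-π) π) volume := by
    rw [intervalIntegrable_iff, hIoc] at hfi; exact hfi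
  have hfI' : Integrable f ν := hfI
  -- product integrability of the dominating function
  have hdom : Integrable (fun p : ℝ × ℝ => B * |f p.2|) (ν.prod ν) := by
    have h1 : Integrable (fun _ : ℝ => B) ν := integrable_const B
    have h2 : Integrable (fun t => |f t|) ν := hfI'.abs
    exact h1.mul_prod h2
  -- product integrability of (x,t) ↦ f t * Phi (t - x) and its abs version
  have hmeas : Measurable (fun p : ℝ × ℝ => f p.2 * Phi n m (p.2 - p.1)) := by
    apply Measurable.mul (hfm.comp measurable_snd)
    exact (phi_measurable n m).comp (measurable_snd.sub measurable_fst)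
  have hbound : ∀ p : ℝ × ℝ, ‖f p.2 * Phi n m (p.2 - p.1)‖ ≤ B * |f p.2| := by
    intro p
    rw [norm_mul, Real.norm_eq_abs, Real.norm_eq_abs, mul_comm B]
    exact mul_le_mul_of_nonneg_left (phi_abs_le hmn _) (abs_nonneg _)
  have hprod : Integrable (fun p : ℝ × ℝ => f p.2 * Phi n m (p.2 - p.1)) (ν.prod ν) :=
    hdom.mono' (hmeas.aestronglyMeasurable) (ae_of_all _ hbound)
  have hprodAbs : Integrable (fun p : ℝ × ℝ => |f p.2| * |Phi n m (p.2 - p.1)|) (ν.prod ν) :=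
    hdom.mono' ((hfm.comp measurable_snd).abs.mul
      (((phi_measurable n m).comp (measurable_snd.sub measurable_fst)).abs)).aestronglyMeasurable
      (ae_of_all _ (fun p => by
        rw [Real.norm_eq_abs, abs_mul, abs_abs, abs_abs, ← abs_mul]
        exact hbound p))
  -- marginal integrabilities
  have hmarg : Integrable (fun x => ∫ t, |f t| * |Phi n m (t - x)| ∂ν) ν :=
    hprodAbs.integral_prod_left
  have hmargV : Integrable (fun x => ∫ t, f t * Phi n m (t - x) ∂ν) ν :=
    hprod.integral_prod_left
  -- vdlP as a set integral
  have hvdlP : ∀ x, vdlP n m f x = (1/(π*M)) * ∫ t, f t * Phi n m (t - x) ∂ν := by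
    intro x
    rw [vdlP, intervalIntegral.integral_of_le hππ]
  -- pointwise bound
  have hpt : ∀ x, |vdlP n m f x| ≤ (1/(π*M)) * ∫ t, |f t| * |Phi n m (t - x)| ∂ν := by
    intro x
    rw [hvdlP, abs_mul, abs_of_pos (show (0:ℝ) < 1/(π*M) by positivity)]
    apply mul_le_mul_of_nonneg_left _ (by positivity)
    simpa [Real.norm_eq_abs] using
      MeasureTheory.norm_integral_le_integral_norm (μ := ν)
        (fun t => f t * Phi n m (t - x))
  -- inner integral in x of the kernel
  set J : ℝ := ∫ t in (-π)..π, |Phi n m t| with hJ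
  have hper' : Function.Periodic (fun t => |Phi n m t|) (2*π) := fun t => by
    simp [phi_periodic hmn t]
  have hinner : ∀ t : ℝ, (∫ x, |Phi n m (t - x)| ∂ν) = J := by
    intro t
    have h0 : (∫ x, |Phi n m (t - x)| ∂ν) = ∫ x in (-π)..π, |Phi n m (t - x)| := by
      rw [intervalIntegral.integral_of_le hππ]
    rw [h0, intervalIntegral.integral_comp_sub_left (fun u => |Phi n m u|) t]
    have h1 : (∫ u in (t-π)..(t+π), |Phi n m u|) = ∫ u in (-π)..(-π+2*π), |Phi n m u| := by
      have := hper'.intervalIntegral_add_eq (t - π) (-π)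
      rwa [show t - π + 2*π = t + π by ring] at this
    rw [show t - π = t - π by rfl]
    calc (∫ u in t - π..t - -π, |Phi n m u|) = ∫ u in (t-π)..(t+π), |Phi n m u| := by ring_nf
      _ = ∫ u in (-π)..(-π+2*π), |Phi n m u| := h1
      _ = J := by rw [hJ]; congr 1; ring
  -- Fubini
  have hswap : (∫ x, (∫ t, |f t| * |Phi n m (t - x)| ∂ν) ∂ν) = J * ∫ t, |f t| ∂ν := by
    rw [MeasureTheory.integral_integral_swap]
    · calc (∫ t, (∫ x, |f t| * |Phi n m (t - x)| ∂ν) ∂ν)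
          = ∫ t, |f t| * (∫ x, |Phi n m (t - x)| ∂ν) ∂ν := by
            congr 1; funext t; exact MeasureTheory.integral_const_mul _ _
        _ = ∫ t, |f t| * J ∂ν := by simp_rw [hinner]
        _ = J * ∫ t, |f t| ∂ν := by rw [MeasureTheory.integral_mul_const, mul_comm]
    · exact hprodAbs
  -- integrability of |vdlP|
  have hvint : IntervalIntegrable (fun x => |vdlP n m f x|) volume (-π) π := by
    rw [intervalIntegrable_iff, hIoc]
    have : IntegrableOn (fun x => vdlP n m f x) (Set.Ioc (-π) π) volume := by
      have := hmargV.const_mul (1/(π*M))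
      apply this.congr
      filter_upwards with x
      rw [hvdlP]
    exact this.abs
  have hrint : IntervalIntegrable (fun x => (1/(π*M)) * ∫ t, |f t| * |Phi n m (t - x)| ∂ν)
      volume (-π) π := by
    rw [intervalIntegrable_iff, hIoc]
    exact hmarg.const_mul _
  -- main chain
  have hfnn : (0:ℝ) ≤ ∫ t in (-π)..π, |f t| := by
    apply intervalIntegral.integral_nonneg hππ
    intro t _; exact abs_nonneg _
  have hfeq : (∫ t, |f t| ∂ν) = ∫ t in (-π)..π, |f t| := by
    rw [intervalIntegral.integral_of_le hππ]
  have hL0 : 0 ≤ L := by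
    rw [hLdef]
    apply Real.log_nonneg
    rw [le_div_iff₀ hM0, hM, one_mul]
    have : (m:ℝ) ≤ n := by exact_mod_cast hmn
    linarith
  calc (∫ x in (-π)..π, |vdlP n m f x|)
      ≤ ∫ x in (-π)..π, (1/(π*M)) * ∫ t, |f t| * |Phi n m (t - x)| ∂ν := by
        apply intervalIntegral.integral_mono_on hππ hvint hrint
        intro x _; exact hpt x
    _ = (1/(π*M)) * ∫ x, (∫ t, |f t| * |Phi n m (t - x)| ∂ν) ∂ν := by
        rw [intervalIntegral.integral_of_le hππ, MeasureTheory.integral_const_mul]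
    _ = (1/(π*M)) * (J * ∫ t in (-π)..π, |f t|) := by rw [hswap, hfeq]
    _ ≤ (1/(π*M)) * ((M * (K * (1 + L))) * ∫ t in (-π)..π, |f t|) := by
        apply mul_le_mul_of_nonneg_left _ (by positivity)
        apply mul_le_mul_of_nonneg_right _ hfnn
        exact kernel_L1 hmn
    _ = K/π * (1 + L) * ∫ t in (-π)..π, |f t| := by
        field_simp
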